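/- Let V, W, Q be finite-dimensional real inner product spaces and let G : Q →ₗ[ℝ] V, K : V →ₗ[ℝ] W, Z : V →ₗ[ℝ] V be linear maps with K ∘ G = 0 and Z ∘ G = 0, Z self-adjoint. Let α > 0 and suppose (E', B', p') ∈ V × W × Q satisfies: α E' − Kᵀ B' + G p' + Z E' = α E + Kᵀ B − Z E, K E' + α B' = −K E + α B, −Gᵀ E' + α p' = 0, where E ∈ V, B ∈ W satisfy Gᵀ E = 0, and Gᵀ, Kᵀ denote adjoints. If Gᵀ G + α² id is positive definite on Q, then p' = 0 and Gᵀ E' = 0. -/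
import Mathlib


open RealInnerProductSpace

theorem stmt_6 {V W Q : Type*}
    [NormedAddCommGroup V] [InnerProductSpace ℝ V] [FiniteDimensional ℝ V]
    [NormedAddCommGroup W] [InnerProductSpace ℝ W] [FiniteDimensional ℝ W]
    [NormedAddCommGroup Q] [InnerProductSpace ℝ Q] [FiniteDimensional ℝ Q]
    (G : Q →ₗ[ℝ] V) (K : V →ₗ[ℝ] W) (Z : V →ₗ[ℝ] V)
    (hKG : K ∘ₗ G = 0) (hZG : Z ∘ₗ G = 0)
    (hZsym : LinearMap.adjoint Z = Z)
    (α : ℝ) (hα : 0 < α)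
    (E E' : V) (B B' : W) (p' : Q)
    (hE : LinearMap.adjoint G E = 0)
    (heq1 : α • E' - (LinearMap.adjoint K) B' + G p' + Z E'
          = α • E + (LinearMap.adjoint K) B - Z E)
    (heq2 : K E' + α • B' = -(K E) + α • B)
    (heq3 : -(LinearMap.adjoint G) E' + α • p' = 0)
    (hpos : ∀ q : Q, q ≠ 0 →
      0 < ⟪((LinearMap.adjoint G ∘ₗ G) + α^2 • (LinearMap.id : Q →ₗ[ℝ] Q)) q, q⟫) :
    p' = 0 ∧ LinearMap.adjoint G E' = 0 := by
  have hGK : LinearMap.adjoint G ∘ₗ LinearMap.adjoint K = 0 := by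
    rw [← LinearMap.adjoint_comp, hKG, map_zero]
  have hGZ : LinearMap.adjoint G ∘ₗ Z = 0 := by
    rw [← hZsym, ← LinearMap.adjoint_comp, hZG, map_zero]
  have hGKx : ∀ x : W, LinearMap.adjoint G (LinearMap.adjoint K x) = 0 := fun x => by
    have := congrFun (congrArg DFunLike.coe hGK) x; simpa using this
  have hGZx : ∀ x : V, LinearMap.adjoint G (Z x) = 0 := fun x => by
    have := congrFun (congrArg DFunLike.coe hGZ) x; simpa using this
  have h1 := congrArg (LinearMap.adjoint G) heq1
  simp only [map_add, map_sub, map_smul, hGKx, hGZx, hE, smul_zero, sub_zero,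
    add_zero, zero_sub, zero_add] at h1
  -- h1 : α • adjoint G E' + adjoint G (G p') = 0 (roughly)
  have h3 : LinearMap.adjoint G E' = α • p' := by
    have := heq3
    rwa [neg_add_eq_zero] at this
  rw [h3] at h1
  have hkey : (LinearMap.adjoint G ∘ₗ G) p' + α ^ 2 • p' = 0 := by
    simpa [LinearMap.comp_apply, smul_smul, pow_two, add_comm] using h1
  have hp : p' = 0 := by
    by_contra hne
    have := hpos p' hne
    rw [LinearMap.add_apply, LinearMap.smul_apply, LinearMap.id_apply] at this
    rw [hkey] at this
    simp at this
  refine ⟨hp, ?_⟩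
  rw [h3, hp, smul_zero]
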